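/- Let H_u, H_s, H_d be independent exponential random variables with means σ_{uv}², σ_{sv}², σ_{dv}² respectively, and let P_u, P_s, P_d, Δ_u, N₀ > 0. Then P(P_u H_u / (P_s H_s + P_d H_d + N₀) < Δ_u) = 1 - [exp(-Δ_u N₀/(P_u σ_{uv}²))] / [(1 + Δ_u P_s σ_{sv}²/(P_u σ_{uv}²))(1 + Δ_u P_d σ_{dv}²/(P_u σ_{uv}²))]. -/

import Mathlib

open MeasureTheory Real Set Filter

section Helpers

lemma tail_exp_div {σ : ℝ} (hσ : 0 < σ) (a : ℝ) :
    ∫ x in Set.Ioi a, Real.exp (-(x/σ)) = σ * Real.exp (-(a/σ)) := by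
  have hderiv : ∀ x ∈ Ici a, HasDerivAt (fun x => -σ * Real.exp (-(x/σ)))
      (Real.exp (-(x/σ))) x := by
    intro x _
    have h1 : HasDerivAt (fun x : ℝ => -(x/σ)) (-(1/σ)) x := by
      simpa using ((hasDerivAt_id x).div_const σ).fun_neg
    have := (h1.exp.const_mul (-σ))
    refine this.congr_deriv ?_
    field_simp
  have hpos : ∀ x ∈ Ioi a, 0 ≤ Real.exp (-(x/σ)) := fun x _ => (Real.exp_pos _).le
  have htend : Tendsto (fun x => -σ * Real.exp (-(x/σ))) atTop (nhds 0) := by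
    have h2 : Tendsto (fun x : ℝ => -(x/σ)) atTop atBot := by
      apply tendsto_neg_atBot_iff.mpr
      exact tendsto_id.atTop_div_const hσ
    have := Real.tendsto_exp_atBot.comp h2
    simpa using this.const_mul (-σ)
  have := integral_Ioi_of_hasDerivAt_of_nonneg' hderiv hpos htend
  rw [this]; ring

lemma tail_exp {l : ℝ} (hl : 0 < l) (a : ℝ) :
    ∫ x in Set.Ioi a, Real.exp (-(l*x)) = Real.exp (-(l*a)) / l := by
  have hderiv : ∀ x ∈ Ici a, HasDerivAt (fun x => -(1/l) * Real.exp (-(l*x)))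
      (Real.exp (-(l*x))) x := by
    intro x _
    have h1 : HasDerivAt (fun x : ℝ => -(l*x)) (-l) x := by
      simpa using ((hasDerivAt_id x).const_mul l).fun_neg
    have := (h1.exp.const_mul (-(1/l)))
    refine this.congr_deriv ?_
    field_simp
  have hpos : ∀ x ∈ Ioi a, 0 ≤ Real.exp (-(l*x)) := fun x _ => (Real.exp_pos _).le
  have htend : Tendsto (fun x => -(1/l) * Real.exp (-(l*x))) atTop (nhds 0) := by
    have h2 : Tendsto (fun x : ℝ => -(l*x)) atTop atBot := by
      apply tendsto_neg_atBot_iff.mpr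
      exact (tendsto_id.const_mul_atTop hl)
    have := Real.tendsto_exp_atBot.comp h2
    simpa using this.const_mul (-(1/l))
  have := integral_Ioi_of_hasDerivAt_of_nonneg' hderiv hpos htend
  rw [this]; ring

lemma lin_exp_antideriv {l : ℝ} (hl : 0 < l) :
    ∀ x ∈ Ici (0:ℝ), HasDerivAt (fun x => -(x/l + 1/l^2) * Real.exp (-(l*x)))
      (x * Real.exp (-(l*x))) x := by
  intro x _
  have h1 : HasDerivAt (fun x : ℝ => -(l*x)) (-l) x := by
    simpa using ((hasDerivAt_id x).const_mul l).fun_neg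
  have h2 : HasDerivAt (fun x : ℝ => -(x/l + 1/l^2)) (-(1/l)) x := by
    have := (((hasDerivAt_id x).div_const l).add_const (1/l^2)).fun_neg
    simpa using this
  have := h2.mul h1.exp
  refine this.congr_deriv ?_
  field_simp
  ring

lemma lin_exp_tendsto {l : ℝ} (hl : 0 < l) :
    Tendsto (fun x => -(x/l + 1/l^2) * Real.exp (-(l*x))) atTop (nhds 0) := by
  have hx : Tendsto (fun x : ℝ => x * Real.exp (-(l*x))) atTop (nhds 0) := by
    have := tendsto_rpow_mul_exp_neg_mul_atTop_nhds_zero 1 l hl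
    apply this.congr'
    filter_upwards [eventually_gt_atTop (0:ℝ)] with x hx
    rw [Real.rpow_one, neg_mul]
  have he : Tendsto (fun x : ℝ => Real.exp (-(l*x))) atTop (nhds 0) := by
    have h2 : Tendsto (fun x : ℝ => -(l*x)) atTop atBot := by
      apply tendsto_neg_atBot_iff.mpr
      exact (tendsto_id.const_mul_atTop hl)
    exact Real.tendsto_exp_atBot.comp h2
  have := (hx.const_mul (-(1/l))).add (he.const_mul (-(1/l^2)))
  simp only [mul_zero, add_zero, zero_add] at this
  apply this.congr
  intro x; ring

lemma intOn_exp {l : ℝ} (hl : 0 < l) (a : ℝ) :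
    IntegrableOn (fun x => Real.exp (-(l*x))) (Set.Ioi a) := by
  simpa [neg_mul] using exp_neg_integrableOn_Ioi a hl

lemma exp_tail_ind {σ : ℝ} (hσ : 0 < σ) (c : ℝ) :
    ∫ d in Set.Ioi (0:ℝ), (if c < d then (1:ℝ) else 0) * Real.exp (-(d/σ))
      = σ * Real.exp (-(max c 0 / σ)) := by
  have h1 : ∀ d : ℝ, (if c < d then (1:ℝ) else 0) * Real.exp (-(d/σ))
      = Set.indicator (Set.Ioi c) (fun d => Real.exp (-(d/σ))) d := by
    intro d
    by_cases h : c < d <;> simp [Set.indicator, h, Set.mem_Ioi]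
  simp_rw [h1]
  rw [setIntegral_indicator measurableSet_Ioi, Set.Ioi_inter_Ioi,
    tail_exp_div hσ, max_comm]

lemma interval_exp (l a b : ℝ) (hl : l ≠ 0) :
    ∫ x in a..b, Real.exp (l*x) = (Real.exp (l*b) - Real.exp (l*a)) / l := by
  have hderiv : ∀ x ∈ Set.uIcc a b, HasDerivAt (fun x => Real.exp (l*x) / l)
      (Real.exp (l*x)) x := by
    intro x _
    have h1 : HasDerivAt (fun x : ℝ => l*x) l x := by
      simpa using ((hasDerivAt_id x).const_mul l)
    have := h1.exp.div_const l
    refine this.congr_deriv ?_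
    field_simp
  rw [intervalIntegral.integral_eq_sub_of_hasDerivAt hderiv
    ((Real.continuous_exp.comp (continuous_const.mul continuous_id)).intervalIntegrable a b)]
  ring

lemma middle {σ b : ℝ} (hσ : 0 < σ) (hb : 0 < b) (a : ℝ) :
    ∫ s in Set.Ioi (0:ℝ), Real.exp (-(max (a - b*s) 0)) * ((1/σ) * Real.exp (-(s/σ)))
      = if a ≤ 0 then 1
        else if σ*b = 1 then (1+a) * Real.exp (-a)
        else (σ*b*Real.exp (-(a/(b*σ))) - Real.exp (-a)) / (σ*b-1) := by
  by_cases ha : a ≤ 0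
  · rw [if_pos ha]
    have hcongr : ∀ s ∈ Set.Ioi (0:ℝ),
        Real.exp (-(max (a - b*s) 0)) * ((1/σ) * Real.exp (-(s/σ)))
          = (1/σ) * Real.exp (-(s/σ)) := by
      intro s hs
      have : max (a - b*s) 0 = 0 := by
        apply max_eq_right
        nlinarith [mem_Ioi.mp hs]
      rw [this]; simp
    rw [setIntegral_congr_fun measurableSet_Ioi hcongr, integral_const_mul, tail_exp_div hσ]
    field_simp
    simp
  · rw [if_neg ha]
    push_neg at ha
    have hab : 0 < a / b := div_pos ha hb
    -- split the domain
    have hsplit : Set.Ioi (0:ℝ) = Set.Ioc 0 (a/b) ∪ Set.Ioi (a/b) :=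
      (Set.Ioc_union_Ioi_eq_Ioi hab.le).symm
    set f : ℝ → ℝ := fun s => Real.exp (-(max (a - b*s) 0)) * ((1/σ) * Real.exp (-(s/σ)))
      with hf
    have hcont : Continuous f := by
      apply Continuous.mul
      · exact Real.continuous_exp.comp ((continuous_const.sub (continuous_const.mul
          continuous_id)).max continuous_const).neg
      · exact continuous_const.mul (Real.continuous_exp.comp (continuous_id.div_const σ).neg)
    have hint1 : IntegrableOn f (Set.Ioc 0 (a/b)) := hcont.integrableOn_Ioc
    have hint2 : IntegrableOn f (Set.Ioi (a/b)) := by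
      apply IntegrableOn.congr_fun (f := fun s => (1/σ) * Real.exp (-(s/σ)))
      · exact ((intOn_exp (show (0:ℝ) < 1/σ by positivity) (a/b)).congr_fun
          (fun x _ => by rw [show -(1/σ*x) = -(x/σ) by ring]) measurableSet_Ioi).const_mul _
      · intro s hs
        have : max (a - b*s) 0 = 0 := by
          apply max_eq_right
          have := mem_Ioi.mp hs
          nlinarith [(div_lt_iff₀ hb).mp this]
        rw [hf]; simp [this]
      · exact measurableSet_Ioi
    rw [hsplit, setIntegral_union (Set.Ioc_disjoint_Ioi le_rfl) measurableSet_Ioi hint1 hint2]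
    have hpiece2 : ∫ s in Set.Ioi (a/b), f s = Real.exp (-(a/(b*σ))) := by
      have hcongr2 : ∀ s ∈ Set.Ioi (a/b), f s = (1/σ) * Real.exp (-(s/σ)) := by
        intro s hs
        have hm : max (a - b*s) 0 = 0 := by
          apply max_eq_right
          have := mem_Ioi.mp hs
          nlinarith [(div_lt_iff₀ hb).mp this]
        rw [hf]; simp [hm]
      rw [setIntegral_congr_fun measurableSet_Ioi hcongr2, integral_const_mul, tail_exp_div hσ]
      rw [div_div]
      field_simp
    have hcongr1 : ∀ s ∈ Set.Ioc (0:ℝ) (a/b),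
        f s = (Real.exp (-a)/σ) * Real.exp ((b - 1/σ)*s) := by
      intro s hs
      have hm : max (a - b*s) 0 = a - b*s := by
        apply max_eq_left
        have h2 := hs.2
        nlinarith [(le_div_iff₀ hb).mp h2]
      rw [hf]; simp only [hm]
      have h3 : Real.exp (-(a - b*s)) * Real.exp (-(s/σ))
          = Real.exp (-a) * Real.exp ((b - 1/σ)*s) := by
        rw [← Real.exp_add, ← Real.exp_add]; congr 1; ring
      calc Real.exp (-(a - b*s)) * (1/σ * Real.exp (-(s/σ)))
          = (Real.exp (-(a-b*s)) * Real.exp (-(s/σ))) * (1/σ) := by ring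
        _ = (Real.exp (-a) * Real.exp ((b-1/σ)*s)) * (1/σ) := by rw [h3]
        _ = Real.exp (-a)/σ * Real.exp ((b-1/σ)*s) := by ring
    rw [setIntegral_congr_fun measurableSet_Ioc hcongr1, integral_const_mul, hpiece2,
      ← intervalIntegral.integral_of_le hab.le]
    by_cases hr : σ*b = 1
    · rw [if_pos hr]
      have hb1 : b - 1/σ = 0 := by
        field_simp
        linarith [hr]
      rw [hb1]
      simp only [zero_mul, Real.exp_zero]
      rw [intervalIntegral.integral_const]
      have h1 : a/(b*σ) = a := by
        rw [mul_comm b σ, hr, div_one]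
      rw [h1]
      have hbne : b ≠ 0 := ne_of_gt hb
      have hinv : σ = 1/b := by rw [eq_div_iff hbne]; linarith [hr]
      rw [hinv]
      field_simp
      ring
      field_simp
    · rw [if_neg hr]
      have hrne : b - 1/σ ≠ 0 := by
        intro h
        apply hr
        have : b = 1/σ := by linarith
        rw [this]; field_simp
      rw [interval_exp _ _ _ hrne]
      have hkey : Real.exp (-a) * Real.exp ((b - 1/σ)*(a/b)) = Real.exp (-(a/(b*σ))) := by
        rw [← Real.exp_add]
        congr 1
        field_simp
        ring
      have hσne : σ ≠ 0 := ne_of_gt hσ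
      have hbne : b ≠ 0 := ne_of_gt hb
      have hd : σ*b - 1 ≠ 0 := by
        intro h; apply hr; linarith
      have hX : Real.exp ((b - 1/σ) * (a/b)) = Real.exp (-(a/(b*σ))) / Real.exp (-a) := by
        rw [eq_div_iff (Real.exp_ne_zero _), mul_comm]; exact hkey
      have hbs : b - 1/σ = (σ*b-1)/σ := by field_simp
      simp only [mul_zero, Real.exp_zero]
      rw [hX, hbs, eq_div_iff hd]
      field_simp [Real.exp_ne_zero]
      ring

lemma exp_shift_eq {l : ℝ} (c x : ℝ) :
    Real.exp (-(l*(x-c))) = Real.exp (l*c) * Real.exp (-(l*x)) := by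
  rw [← Real.exp_add]; congr 1; ring

lemma tail_exp_shift {l : ℝ} (hl : 0 < l) (c : ℝ) :
    ∫ x in Set.Ioi c, Real.exp (-(l*(x-c))) = 1/l := by
  simp_rw [exp_shift_eq c]
  rw [integral_const_mul, tail_exp hl, ← mul_div_assoc, ← Real.exp_add]
  simp

lemma intOn_exp_shift {l : ℝ} (hl : 0 < l) (c : ℝ) :
    IntegrableOn (fun x => Real.exp (-(l*(x-c)))) (Set.Ioi c) := by
  have := (intOn_exp hl c).const_mul (Real.exp (l*c))
  exact IntegrableOn.congr_fun this (fun x _ => (exp_shift_eq c x).symm) measurableSet_Ioi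

lemma lin_exp_shift_antideriv {l : ℝ} (hl : 0 < l) (c : ℝ) :
    ∀ x ∈ Ici c, HasDerivAt (fun x => -((x-c)/l + 1/l^2) * Real.exp (-(l*(x-c))))
      ((x-c) * Real.exp (-(l*(x-c)))) x := by
  intro x hx
  have h1 := lin_exp_antideriv hl (x - c) (by simpa using (sub_nonneg.mpr (mem_Ici.mp hx)))
  have h2 : HasDerivAt (fun x : ℝ => x - c) 1 x := (hasDerivAt_id x).sub_const c
  have := HasDerivAt.comp x h1 h2
  simpa [Function.comp_def] using this

lemma lin_exp_shift_tendsto {l : ℝ} (hl : 0 < l) (c : ℝ) :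
    Tendsto (fun x => -((x-c)/l + 1/l^2) * Real.exp (-(l*(x-c)))) atTop (nhds 0) := by
  have h2 : Tendsto (fun x : ℝ => x - c) atTop atTop := tendsto_atTop_add_const_right _ (-c)
    tendsto_id |>.congr (fun x => by simp [sub_eq_add_neg, add_comm])
  exact (lin_exp_tendsto hl).comp h2

lemma tail_lin_exp_shift {l : ℝ} (hl : 0 < l) (c : ℝ) :
    ∫ x in Set.Ioi c, (x-c) * Real.exp (-(l*(x-c))) = 1/l^2 := by
  have hpos : ∀ x ∈ Ioi c, 0 ≤ (x-c) * Real.exp (-(l*(x-c))) :=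
    fun x hx => mul_nonneg (by simpa using (mem_Ioi.mp hx).le) (Real.exp_pos _).le
  have := integral_Ioi_of_hasDerivAt_of_nonneg' (lin_exp_shift_antideriv hl c) hpos
    (lin_exp_shift_tendsto hl c)
  rw [this]
  simp

lemma intOn_lin_exp_shift {l : ℝ} (hl : 0 < l) (c : ℝ) :
    IntegrableOn (fun x => (x-c) * Real.exp (-(l*(x-c)))) (Set.Ioi c) := by
  have hpos : ∀ x ∈ Ioi c, 0 ≤ (x-c) * Real.exp (-(l*(x-c))) :=
    fun x hx => mul_nonneg (by simpa using (mem_Ioi.mp hx).le) (Real.exp_pos _).le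
  exact integrableOn_Ioi_deriv_of_nonneg' (lin_exp_shift_antideriv hl c) hpos
    (lin_exp_shift_tendsto hl c)

end Helpers

set_option maxHeartbeats 1000000 in
/-- Primary outage probability with two secondary interferers (equation (3)):
`P(Pu·Hu / (Ps·Hs + Pd·Hd + N0) < Δu)` for independent exponential channel gains. -/
theorem stmt_1 (Pu Ps Pd Δu N0 σuv σsv σdv : ℝ)
    (hPu : 0 < Pu) (hPs : 0 < Ps) (hPd : 0 < Pd) (hΔu : 0 < Δu) (hN0 : 0 < N0)
    (hσuv : 0 < σuv) (hσsv : 0 < σsv) (hσdv : 0 < σdv) :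
    (∫ u in Set.Ioi (0:ℝ), ∫ s in Set.Ioi (0:ℝ), ∫ d in Set.Ioi (0:ℝ),
        (if Pu * u / (Ps * s + Pd * d + N0) < Δu then (1:ℝ) else 0) *
          ((1 / σuv) * Real.exp (-u / σuv)) *
          ((1 / σsv) * Real.exp (-s / σsv)) *
          ((1 / σdv) * Real.exp (-d / σdv)))
      = 1 - Real.exp (-(Δu * N0) / (Pu * σuv)) /
          ((1 + Δu * Ps * σsv / (Pu * σuv)) * (1 + Δu * Pd * σdv / (Pu * σuv))) := by
  have hk1 : (0:ℝ) < Δu*N0/Pu := by positivity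
  set k1 : ℝ := Δu*N0/Pu with hk1def
  have hbm : (0:ℝ) < Ps/(Pd*σdv) := by positivity
  set bm : ℝ := Ps/(Pd*σdv) with hbmdef
  have hγ : (0:ℝ) < Pu/(Δu*Pd*σdv) := by positivity
  set γ : ℝ := Pu/(Δu*Pd*σdv) with hγdef
  have hβ : (0:ℝ) < Pu/(Δu*Ps*σsv) := by positivity
  set β : ℝ := Pu/(Δu*Ps*σsv) with hβdef
  -- Step A: reduce inner double integral
  have stepA : ∀ u ∈ Set.Ioi (0:ℝ),
      (∫ s in Set.Ioi (0:ℝ), ∫ d in Set.Ioi (0:ℝ),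
        (if Pu * u / (Ps * s + Pd * d + N0) < Δu then (1:ℝ) else 0) *
          ((1 / σuv) * Real.exp (-u / σuv)) *
          ((1 / σsv) * Real.exp (-s / σsv)) *
          ((1 / σdv) * Real.exp (-d / σdv)))
      = ((1/σuv) * Real.exp (-u/σuv)) *
        (if γ*(u - k1) ≤ 0 then (1:ℝ)
         else if σsv*bm = 1 then (1+γ*(u-k1))*Real.exp (-(γ*(u-k1)))
         else (σsv*bm*Real.exp (-((γ*(u-k1))/(bm*σsv))) - Real.exp (-(γ*(u-k1))))/(σsv*bm-1)) := by
    intro u hu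
    have hinner : ∀ s ∈ Set.Ioi (0:ℝ),
        (∫ d in Set.Ioi (0:ℝ),
          (if Pu * u / (Ps * s + Pd * d + N0) < Δu then (1:ℝ) else 0) *
            ((1 / σuv) * Real.exp (-u / σuv)) *
            ((1 / σsv) * Real.exp (-s / σsv)) *
            ((1 / σdv) * Real.exp (-d / σdv)))
        = ((1/σuv) * Real.exp (-u/σuv)) *
          (Real.exp (-(max (γ*(u-k1) - bm*s) 0)) * ((1/σsv) * Real.exp (-(s/σsv)))) := by
      intro s hs
      have hs' : (0:ℝ) < s := mem_Ioi.mp hs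
      have hrw : ∀ d ∈ Set.Ioi (0:ℝ),
          (if Pu * u / (Ps * s + Pd * d + N0) < Δu then (1:ℝ) else 0) *
            ((1 / σuv) * Real.exp (-u / σuv)) *
            ((1 / σsv) * Real.exp (-s / σsv)) *
            ((1 / σdv) * Real.exp (-d / σdv))
          = (((1/σuv) * Real.exp (-u/σuv)) * ((1/σsv) * Real.exp (-s/σsv)) * (1/σdv)) *
            ((if (Pu*u - Δu*(Ps*s+N0))/(Δu*Pd) < d then (1:ℝ) else 0) * Real.exp (-(d/σdv))) := by
        intro d hd
        have hd' : (0:ℝ) < d := mem_Ioi.mp hd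
        have hden : (0:ℝ) < Ps*s + Pd*d + N0 := by
          have h1 := mul_pos hPs hs'
          have h2 := mul_pos hPd hd'
          linarith
        have hiff : (Pu * u / (Ps * s + Pd * d + N0) < Δu)
            ↔ ((Pu*u - Δu*(Ps*s+N0))/(Δu*Pd) < d) := by
          rw [div_lt_iff₀ hden, div_lt_iff₀ (by positivity : (0:ℝ) < Δu*Pd)]
          constructor <;> intro h <;> nlinarith
        rw [if_congr hiff rfl rfl, show (-d/σdv) = -(d/σdv) by ring]
        ring
      rw [setIntegral_congr_fun measurableSet_Ioi hrw, integral_const_mul,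
        exp_tail_ind hσdv ((Pu*u - Δu*(Ps*s+N0))/(Δu*Pd))]
      have hmax : max ((Pu*u - Δu*(Ps*s+N0))/(Δu*Pd)) 0 / σdv = max (γ*(u-k1) - bm*s) 0 := by
        rw [← max_div_div_right hσdv.le ((Pu*u - Δu*(Ps*s+N0))/(Δu*Pd)) 0, zero_div]
        congr 1
        rw [hγdef, hk1def, hbmdef]
        field_simp
        ring
      rw [hmax, show (-s/σsv) = -(s/σsv) by ring]
      field_simp
    rw [setIntegral_congr_fun measurableSet_Ioi hinner, integral_const_mul,
      middle hσsv hbm (γ*(u-k1))]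
  rw [setIntegral_congr_fun measurableSet_Ioi stepA]
  -- abbreviate the closed-form middle value
  have hsetsplit : Set.Ioi (0:ℝ) = Set.Ioc 0 k1 ∪ Set.Ioi k1 :=
    (Set.Ioc_union_Ioi_eq_Ioi hk1.le).symm
  have hfu_int : IntegrableOn (fun u => (1/σuv) * Real.exp (-u/σuv)) (Set.Ioi (0:ℝ)) := by
    have := (intOn_exp (show (0:ℝ) < 1/σuv by positivity) 0).const_mul (1/σuv)
    exact IntegrableOn.congr_fun this
      (fun x _ => by rw [show -(1/σuv*x) = -x/σuv by ring]) measurableSet_Ioi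
  have hEq1 : ∀ u ∈ Set.Ioc (0:ℝ) k1,
      (fun u => ((1/σuv) * Real.exp (-u/σuv)) *
        (if γ*(u - k1) ≤ 0 then (1:ℝ)
         else if σsv*bm = 1 then (1+γ*(u-k1))*Real.exp (-(γ*(u-k1)))
         else (σsv*bm*Real.exp (-((γ*(u-k1))/(bm*σsv))) - Real.exp (-(γ*(u-k1))))/(σsv*bm-1))) u
      = (1/σuv) * Real.exp (-u/σuv) := by
    intro u hu
    have h1 : γ*(u-k1) ≤ 0 := mul_nonpos_of_nonneg_of_nonpos hγ.le (by linarith [hu.2])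
    simp only [if_pos h1, mul_one]
  have hint1 : IntegrableOn (fun u => ((1/σuv) * Real.exp (-u/σuv)) *
        (if γ*(u - k1) ≤ 0 then (1:ℝ)
         else if σsv*bm = 1 then (1+γ*(u-k1))*Real.exp (-(γ*(u-k1)))
         else (σsv*bm*Real.exp (-((γ*(u-k1))/(bm*σsv))) - Real.exp (-(γ*(u-k1))))/(σsv*bm-1)))
      (Set.Ioc (0:ℝ) k1) :=
    IntegrableOn.congr_fun (hfu_int.mono_set Set.Ioc_subset_Ioi_self)
      (fun u hu => (hEq1 u hu).symm) measurableSet_Ioc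
  have hpiece1 : (∫ u in Set.Ioc (0:ℝ) k1, ((1/σuv) * Real.exp (-u/σuv)) *
        (if γ*(u - k1) ≤ 0 then (1:ℝ)
         else if σsv*bm = 1 then (1+γ*(u-k1))*Real.exp (-(γ*(u-k1)))
         else (σsv*bm*Real.exp (-((γ*(u-k1))/(bm*σsv))) - Real.exp (-(γ*(u-k1))))/(σsv*bm-1)))
      = 1 - Real.exp (-(k1/σuv)) := by
    rw [setIntegral_congr_fun measurableSet_Ioc hEq1,
      ← intervalIntegral.integral_of_le hk1.le]
    simp_rw [show ∀ u:ℝ, -u/σuv = (-(1/σuv))*u from fun u => by ring]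
    rw [intervalIntegral.integral_const_mul,
      interval_exp _ _ _ (neg_ne_zero.mpr (by positivity : (1/σuv) ≠ 0))]
    rw [show (-(1/σuv))*k1 = -(k1/σuv) by ring, mul_zero, Real.exp_zero]
    field_simp
    ring
  have hRHSarg : -(Δu * N0) / (Pu * σuv) = -(k1/σuv) := by
    rw [hk1def]; field_simp
  rw [hRHSarg, hsetsplit]
  by_cases hcase : σsv*bm = 1
  · -- degenerate case
    have hl1 : (0:ℝ) < 1/σuv + γ := by positivity
    set l1 : ℝ := 1/σuv + γ with hl1def
    have hEq2 : ∀ u ∈ Set.Ioi k1,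
        (fun u => ((1/σuv) * Real.exp (-u/σuv)) *
          (if γ*(u - k1) ≤ 0 then (1:ℝ)
           else if σsv*bm = 1 then (1+γ*(u-k1))*Real.exp (-(γ*(u-k1)))
           else (σsv*bm*Real.exp (-((γ*(u-k1))/(bm*σsv))) - Real.exp (-(γ*(u-k1))))/(σsv*bm-1))) u
        = Real.exp (-(k1/σuv)) * ((1/σuv) * Real.exp (-(l1*(u-k1)))
            + (γ/σuv) * ((u-k1) * Real.exp (-(l1*(u-k1))))) := by
      intro u hu
      have hu' : k1 < u := mem_Ioi.mp hu
      have hpos : 0 < γ*(u-k1) := mul_pos hγ (by linarith)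
      simp only [if_neg (not_le.mpr hpos), if_pos hcase]
      have hkey : Real.exp (-u/σuv) * Real.exp (-(γ*(u-k1)))
          = Real.exp (-(k1/σuv)) * Real.exp (-(l1*(u-k1))) := by
        rw [← Real.exp_add, ← Real.exp_add]
        congr 1
        rw [hl1def]; field_simp; ring
      linear_combination ((1+γ*(u-k1))/σuv) * hkey
    have hint2 : IntegrableOn (fun u => ((1/σuv) * Real.exp (-u/σuv)) *
          (if γ*(u - k1) ≤ 0 then (1:ℝ)
           else if σsv*bm = 1 then (1+γ*(u-k1))*Real.exp (-(γ*(u-k1)))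
           else (σsv*bm*Real.exp (-((γ*(u-k1))/(bm*σsv))) - Real.exp (-(γ*(u-k1))))/(σsv*bm-1)))
        (Set.Ioi k1) := by
      have := (((intOn_exp_shift hl1 k1).const_mul (1/σuv)).add
        ((intOn_lin_exp_shift hl1 k1).const_mul (γ/σuv))).const_mul (Real.exp (-(k1/σuv)))
      exact IntegrableOn.congr_fun this (fun u hu => (hEq2 u hu).symm) measurableSet_Ioi
    rw [setIntegral_union (Set.Ioc_disjoint_Ioi le_rfl) measurableSet_Ioi hint1 hint2, hpiece1,
      setIntegral_congr_fun measurableSet_Ioi hEq2, integral_const_mul,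
      integral_add ((intOn_exp_shift hl1 k1).const_mul _) ((intOn_lin_exp_shift hl1 k1).const_mul _),
      integral_const_mul, integral_const_mul, tail_exp_shift hl1 k1, tail_lin_exp_shift hl1 k1]
    -- final algebra in the degenerate case
    have hps : Δu * Ps * σsv = Δu * (Pd * σdv) := by
      rw [hbmdef] at hcase
      field_simp at hcase
      nlinarith [hcase]
    rw [hps, hl1def, hγdef]
    have h2 : (0:ℝ) < 1 + Δu * (Pd * σdv) / (Pu * σuv) := by positivity
    field_simp
    ring
  · -- non-degenerate case
    have hne : σsv*bm - 1 ≠ 0 := sub_ne_zero.mpr hcase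
    have hlβ : (0:ℝ) < 1/σuv + β := by positivity
    have hlγ : (0:ℝ) < 1/σuv + γ := by positivity
    set lβ : ℝ := 1/σuv + β with hlβdef
    set lγ : ℝ := 1/σuv + γ with hlγdef
    have hEq2 : ∀ u ∈ Set.Ioi k1,
        (fun u => ((1/σuv) * Real.exp (-u/σuv)) *
          (if γ*(u - k1) ≤ 0 then (1:ℝ)
           else if σsv*bm = 1 then (1+γ*(u-k1))*Real.exp (-(γ*(u-k1)))
           else (σsv*bm*Real.exp (-((γ*(u-k1))/(bm*σsv))) - Real.exp (-(γ*(u-k1))))/(σsv*bm-1))) u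
        = Real.exp (-(k1/σuv)) * ((σsv*bm/(σsv*bm-1)/σuv) * Real.exp (-(lβ*(u-k1)))
            - (1/(σsv*bm-1)/σuv) * Real.exp (-(lγ*(u-k1)))) := by
      intro u hu
      have hu' : k1 < u := mem_Ioi.mp hu
      have hpos : 0 < γ*(u-k1) := mul_pos hγ (by linarith)
      simp only [if_neg (not_le.mpr hpos), if_neg hcase]
      rw [show (γ*(u-k1))/(bm*σsv) = β*(u-k1) by
        rw [hγdef, hbmdef, hβdef]; field_simp]
      have hkeyβ : Real.exp (-u/σuv) * Real.exp (-(β*(u-k1)))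
          = Real.exp (-(k1/σuv)) * Real.exp (-(lβ*(u-k1))) := by
        rw [← Real.exp_add, ← Real.exp_add]
        congr 1
        rw [hlβdef]; field_simp; ring
      have hkeyγ : Real.exp (-u/σuv) * Real.exp (-(γ*(u-k1)))
          = Real.exp (-(k1/σuv)) * Real.exp (-(lγ*(u-k1))) := by
        rw [← Real.exp_add, ← Real.exp_add]
        congr 1
        rw [hlγdef]; field_simp; ring
      linear_combination (σsv*bm/(σsv*bm-1)/σuv) * hkeyβ - (1/(σsv*bm-1)/σuv) * hkeyγ
    have hint2 : IntegrableOn (fun u => ((1/σuv) * Real.exp (-u/σuv)) *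
          (if γ*(u - k1) ≤ 0 then (1:ℝ)
           else if σsv*bm = 1 then (1+γ*(u-k1))*Real.exp (-(γ*(u-k1)))
           else (σsv*bm*Real.exp (-((γ*(u-k1))/(bm*σsv))) - Real.exp (-(γ*(u-k1))))/(σsv*bm-1)))
        (Set.Ioi k1) := by
      have := (((intOn_exp_shift hlβ k1).const_mul (σsv*bm/(σsv*bm-1)/σuv)).sub
        ((intOn_exp_shift hlγ k1).const_mul (1/(σsv*bm-1)/σuv))).const_mul
        (Real.exp (-(k1/σuv)))
      exact IntegrableOn.congr_fun this (fun u hu => (hEq2 u hu).symm) measurableSet_Ioi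
    rw [setIntegral_union (Set.Ioc_disjoint_Ioi le_rfl) measurableSet_Ioi hint1 hint2, hpiece1,
      setIntegral_congr_fun measurableSet_Ioi hEq2, integral_const_mul,
      integral_sub ((intOn_exp_shift hlβ k1).const_mul _) ((intOn_exp_shift hlγ k1).const_mul _),
      integral_const_mul, integral_const_mul, tail_exp_shift hlβ k1, tail_exp_shift hlγ k1]
    -- final algebra in the non-degenerate case
    have hps : Ps * σsv - Pd * σdv ≠ 0 := by
      intro h
      apply hcase
      rw [hbmdef]
      field_simp
      nlinarith [h]
    have hr1 : σsv*bm - 1 = (Ps*σsv - Pd*σdv)/(Pd*σdv) := by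
      rw [hbmdef]; field_simp
    have hr2 : σsv*bm = (Ps*σsv)/(Pd*σdv) := by
      rw [hbmdef]; ring
    rw [hr1, hr2, hlβdef, hlγdef, hβdef, hγdef]
    have hzβ : Δu*Ps*σsv + Pu*σuv ≠ 0 := by positivity
    have hzγ : Δu*Pd*σdv + Pu*σuv ≠ 0 := by positivity
    have h1 : (0:ℝ) < 1 + Δu * Ps * σsv / (Pu * σuv) := by positivity
    have h2 : (0:ℝ) < 1 + Δu * Pd * σdv / (Pu * σuv) := by positivity
    field_simp [hps, hzβ, hzγ]
    ring
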